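/- Separation in 𝒫ⁿ_{k,ε} (Theorem 9.4(C)): There exists a constant c(n) with 0 < c(n) < 1, depending only on n, such that for all positive integers k, all reals 0 < ε ≤ 1, and all θ₁, θ₂ ∈ 𝒫ⁿ_{k,ε} with θ₁ ≠ θ₂, one has G(θ₁ − θ₂) ≥ ε · c(n) / k^{3n}. -/

import Mathlib

noncomputable section

/-- The grid `Σ_k = [-1,1]ⁿ ∩ (1/k)·ℤⁿ` of the cube of mesh `1/k`. -/
def grid (n k : ℕ) : Set (EuclideanSpace ℝ (Fin n)) :=
  {x | (∀ i, |x i| ≤ 1) ∧ ∀ i, ∃ m : ℤ, x i = m / k}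

/-- Mass of a finitely supported function `θ : ℝⁿ → ℝ`, identified with the atomic
signed measure `Σ_x θ(x)·δ_x`: `M(θ) = Σ_x |θ(x)|`. -/
def massF (n : ℕ) (θ : EuclideanSpace ℝ (Fin n) →₀ ℝ) : ℝ :=
  ∑ x ∈ θ.support, |θ x|

/-- Dual Lipschitz norm of a finitely supported function `θ : ℝⁿ → ℝ`:
`G(θ) = sup { Σ_x θ(x)·φ(x) : φ 1-Lipschitz }`. -/
def GF (n : ℕ) (θ : EuclideanSpace ℝ (Fin n) →₀ ℝ) : ℝ :=
  sSup {r : ℝ | ∃ φ : EuclideanSpace ℝ (Fin n) → ℝ,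
    LipschitzWith 1 φ ∧ r = ∑ x ∈ θ.support, θ x * φ x}

/-- The net `𝒫ⁿ_{k,ε}`: finitely supported functions carried by the grid `Σ_k`,
with values in `epsh·ℤ` where `epsh = ε/(2n(2k+1)ⁿ)`, total sum `0`, and mass at most
`k·ε`. -/
def Pset (n k : ℕ) (ε : ℝ) : Set (EuclideanSpace ℝ (Fin n) →₀ ℝ) :=
  {θ | ↑θ.support ⊆ grid n k ∧
    (∀ x, ∃ m : ℤ, θ x = (ε / (2 * n * (2 * k + 1) ^ n)) * m) ∧
    ∑ x ∈ θ.support, θ x = 0 ∧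
    ∑ x ∈ θ.support, |θ x| ≤ k * ε}

lemma coord_le_dist {n : ℕ} (x y : EuclideanSpace ℝ (Fin n)) (i : Fin n) :
    |x i - y i| ≤ dist x y := by
  rw [EuclideanSpace.dist_eq]
  rw [show |x i - y i| = Real.sqrt ((dist (x i) (y i))^2) by
    rw [Real.sqrt_sq_eq_abs, Real.dist_eq, abs_abs]]
  apply Real.sqrt_le_sqrt
  exact Finset.single_le_sum (f := fun j => dist (x j) (y j) ^ 2)
    (fun j _ => sq_nonneg _) (Finset.mem_univ i)

lemma lip_bump {α : Type*} [PseudoMetricSpace α] (x₀ : α) (a : ℝ) :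
    LipschitzWith 1 (fun x => max 0 (a - dist x x₀)) := by
  rw [lipschitzWith_iff_dist_le_mul]
  intro x y
  simp only [Real.dist_eq, NNReal.coe_one, one_mul]
  calc |max 0 (a - dist x x₀) - max 0 (a - dist y x₀)|
      ≤ |(a - dist x x₀) - (a - dist y x₀)| := by
        rw [max_comm 0 (a - dist x x₀), max_comm 0 (a - dist y x₀)]
        exact abs_max_sub_max_le_abs _ _ _
    _ = |dist y x₀ - dist x x₀| := by ring_nf
    _ ≤ dist y x := abs_dist_sub_le _ _ _
    _ = dist x y := dist_comm _ _

lemma grid_sep {n k : ℕ} (hk : 0 < k) {x y : EuclideanSpace ℝ (Fin n)}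
    (hx : x ∈ grid n k) (hy : y ∈ grid n k) (hxy : x ≠ y) :
    1 / (k : ℝ) ≤ dist x y := by
  have hex : ∃ i, x i ≠ y i := by
    by_contra h
    push_neg at h
    exact hxy (PiLp.ext h)
  obtain ⟨i, hi⟩ := hex
  obtain ⟨m, hm⟩ := hx.2 i
  obtain ⟨m', hm'⟩ := hy.2 i
  have hkR : (0 : ℝ) < k := by exact_mod_cast hk
  have hmm : m ≠ m' := by
    rintro rfl; exact hi (hm.trans hm'.symm)
  have h1 : (1 : ℝ) ≤ |(m : ℝ) - m'| := by
    have : (1 : ℤ) ≤ |m - m'| := Int.one_le_abs (sub_ne_zero.mpr hmm)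
    calc (1:ℝ) ≤ ((|m - m'| : ℤ) : ℝ) := by exact_mod_cast this
      _ = |(m : ℝ) - m'| := by push_cast [Int.cast_abs]; ring_nf
  have h2 : |x i - y i| = |(m : ℝ) - m'| / k := by
    rw [hm, hm', div_sub_div_same, abs_div, abs_of_pos hkR]
  calc 1 / (k : ℝ) ≤ |(m : ℝ) - m'| / k := by gcongr
    _ = |x i - y i| := h2.symm
    _ ≤ dist x y := coord_le_dist x y i

/-- Separation in `𝒫ⁿ_{k,ε}` (Theorem 9.4(C)): there is `0 < c(n) < 1` such that
for all `k ≥ 1`, all `0 < ε ≤ 1`, and all distinct `θ₁, θ₂ ∈ 𝒫ⁿ_{k,ε}`,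
`G(θ₁ - θ₂) ≥ ε · c(n) / k^{3n}`. -/
theorem stmt12 (n : ℕ) (hn : 0 < n) :
    ∃ c : ℝ, 0 < c ∧ c < 1 ∧ ∀ k : ℕ, 0 < k → ∀ ε : ℝ, 0 < ε → ε ≤ 1 →
      ∀ θ₁ ∈ Pset n k ε, ∀ θ₂ ∈ Pset n k ε, θ₁ ≠ θ₂ →
        ε * c / (k : ℝ) ^ (3 * n) ≤ GF n (θ₁ - θ₂) := by
  classical
  set D : ℝ := 2 * n * 3 ^ n + 1 with hD
  have hD1 : (1 : ℝ) < D := by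
    have : (1 : ℝ) ≤ 2 * n * 3 ^ n := by
      have h1 : (1:ℝ) ≤ (n:ℝ) := by exact_mod_cast hn
      have h2 : (1:ℝ) ≤ (3:ℝ)^n := one_le_pow₀ (by norm_num)
      nlinarith
    simp [hD]; linarith
  have hD0 : (0 : ℝ) < D := by linarith
  refine ⟨1 / D, by positivity, by rw [div_lt_one hD0]; exact hD1, ?_⟩
  intro k hk ε hε hε1 θ₁ hθ₁ θ₂ hθ₂ hne
  set δ := θ₁ - θ₂ with hδdef
  have hkR : (0 : ℝ) < k := by exact_mod_cast hk
  have hk1 : (1 : ℝ) ≤ k := by exact_mod_cast hk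
  set epsh : ℝ := ε / (2 * n * (2 * k + 1) ^ n) with hepsh
  have hden : (0 : ℝ) < 2 * n * (2 * k + 1) ^ n := by positivity
  have hepshpos : 0 < epsh := div_pos hε hden
  -- find a point where they differ
  obtain ⟨x₀, hx₀⟩ : ∃ x, θ₁ x ≠ θ₂ x := by
    by_contra h; push_neg at h; exact hne (Finsupp.ext h)
  have hδx₀ : δ x₀ = θ₁ x₀ - θ₂ x₀ := Finsupp.sub_apply θ₁ θ₂ x₀
  have hδx₀ne : δ x₀ ≠ 0 := by rw [hδx₀]; exact sub_ne_zero.mpr hx₀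
  have hx₀supp : x₀ ∈ δ.support := Finsupp.mem_support_iff.mpr hδx₀ne
  -- lower bound on |δ x₀|
  obtain ⟨m₁, hm₁⟩ := hθ₁.2.1 x₀
  obtain ⟨m₂, hm₂⟩ := hθ₂.2.1 x₀
  have hval : δ x₀ = epsh * (m₁ - m₂) := by
    rw [hδx₀, hm₁, hm₂]; push_cast; ring
  have hmne : m₁ ≠ m₂ := by
    rintro rfl
    exact hδx₀ne (by rw [hval]; simp)
  have hlow : epsh ≤ |δ x₀| := by
    rw [hval, abs_mul, abs_of_pos hepshpos]
    have : (1 : ℝ) ≤ |((m₁ : ℝ) - m₂)| := by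
      have h1 : (1 : ℤ) ≤ |m₁ - m₂| := Int.one_le_abs (sub_ne_zero.mpr hmne)
      calc (1:ℝ) ≤ ((|m₁ - m₂| : ℤ) : ℝ) := by exact_mod_cast h1
        _ = |((m₁ : ℝ) - m₂)| := by push_cast [Int.cast_abs]; ring_nf
    nlinarith
  -- support is in the grid
  have hsupp : ↑δ.support ⊆ grid n k := by
    intro x hx
    have := Finsupp.support_sub (f := θ₁) (g := θ₂) hx
    rcases Finset.mem_union.mp this with h | h
    · exact hθ₁.1 h
    · exact hθ₂.1 h
  have hx₀grid : x₀ ∈ grid n k := hsupp hx₀supp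
  -- sum of δ over its support is 0
  have hsum0 : ∑ x ∈ δ.support, δ x = 0 := by
    have hS : δ.support ⊆ θ₁.support ∪ θ₂.support := Finsupp.support_sub
    rw [Finset.sum_subset hS (fun x _ hx => Finsupp.notMem_support_iff.mp hx)]
    have : ∀ x ∈ θ₁.support ∪ θ₂.support, δ x = θ₁ x - θ₂ x :=
      fun x _ => Finsupp.sub_apply θ₁ θ₂ x
    rw [Finset.sum_congr rfl this, Finset.sum_sub_distrib]
    have h1 : ∑ x ∈ θ₁.support ∪ θ₂.support, θ₁ x = 0 := by
      rw [← Finset.sum_subset Finset.subset_union_left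
        (fun x _ hx => Finsupp.notMem_support_iff.mp hx)]
      exact hθ₁.2.2.1
    have h2 : ∑ x ∈ θ₁.support ∪ θ₂.support, θ₂ x = 0 := by
      rw [← Finset.sum_subset Finset.subset_union_right
        (fun x _ hx => Finsupp.notMem_support_iff.mp hx)]
      exact hθ₂.2.2.1
    rw [h1, h2, sub_zero]
  -- the set defining GF is bounded above
  set T : Set ℝ := {r : ℝ | ∃ φ : EuclideanSpace ℝ (Fin n) → ℝ,
    LipschitzWith 1 φ ∧ r = ∑ x ∈ δ.support, δ x * φ x} with hT
  have hbdd : BddAbove T := by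
    refine ⟨∑ x ∈ δ.support, |δ x| * dist x x₀, ?_⟩
    rintro r ⟨φ, hφ, rfl⟩
    have key : ∑ x ∈ δ.support, δ x * φ x = ∑ x ∈ δ.support, δ x * (φ x - φ x₀) := by
      rw [Finset.sum_congr rfl (fun x _ => by ring :
        ∀ x ∈ δ.support, δ x * φ x = δ x * (φ x - φ x₀) + δ x * φ x₀)]
      rw [Finset.sum_add_distrib, ← Finset.sum_mul, hsum0, zero_mul, add_zero]
    rw [key]
    calc ∑ x ∈ δ.support, δ x * (φ x - φ x₀)
        ≤ ∑ x ∈ δ.support, |δ x * (φ x - φ x₀)| :=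
          Finset.sum_le_sum (fun x _ => le_abs_self _)
      _ ≤ ∑ x ∈ δ.support, |δ x| * dist x x₀ := by
          apply Finset.sum_le_sum
          intro x _
          rw [abs_mul]
          apply mul_le_mul_of_nonneg_left _ (abs_nonneg _)
          have := hφ.dist_le_mul x x₀
          rwa [Real.dist_eq, NNReal.coe_one, one_mul] at this
  -- the value |δ x₀| / k is attained
  have hmem : |δ x₀| * (1 / (k : ℝ)) ∈ T := by
    rcases lt_or_gt_of_ne hδx₀ne with hneg | hpos
    · refine ⟨fun x => -(max 0 (1 / (k:ℝ) - dist x x₀)), ?_, ?_⟩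
      · exact (lip_bump x₀ (1 / (k:ℝ))).neg
      · rw [Finset.sum_eq_single x₀]
        · simp only [dist_self, sub_zero]
          rw [max_eq_right (by positivity), abs_of_neg hneg]; ring
        · intro x hx hxne
          have hgrid := hsupp hx
          have := grid_sep hk hgrid hx₀grid hxne
          simp only [max_eq_left (show 1/(k:ℝ) - dist x x₀ ≤ 0 by linarith),
            neg_zero, mul_zero]
        · intro h; exact absurd hx₀supp h
    · refine ⟨fun x => max 0 (1 / (k:ℝ) - dist x x₀), lip_bump x₀ _, ?_⟩
      rw [Finset.sum_eq_single x₀]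
      · simp only [dist_self, sub_zero]
        rw [max_eq_right (by positivity), abs_of_pos hpos]
      · intro x hx hxne
        have hgrid := hsupp hx
        have := grid_sep hk hgrid hx₀grid hxne
        simp only [max_eq_left (show 1/(k:ℝ) - dist x x₀ ≤ 0 by linarith), mul_zero]
      · intro h; exact absurd hx₀supp h
  have hGF : |δ x₀| * (1 / (k : ℝ)) ≤ GF n δ := le_csSup hbdd hmem
  -- final arithmetic
  have hchain : epsh * (1 / (k : ℝ)) ≤ GF n δ :=
    le_trans (by
      apply mul_le_mul_of_nonneg_right hlow (by positivity)) hGF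
  refine le_trans ?_ hchain
  have e0 : ε * (1 / D) / (k : ℝ) ^ (3 * n) = ε / (D * (k:ℝ) ^ (3 * n)) := by
    field_simp
  have e1 : epsh * (1 / (k : ℝ)) = ε / (2 * n * (2 * k + 1) ^ n * k) := by
    rw [hepsh]; field_simp
  rw [e0, e1]
  apply div_le_div_of_nonneg_left (le_of_lt hε) (by positivity)
  -- show 2n(2k+1)ⁿ k ≤ D k^{3n}
  calc (2 * (n:ℝ) * (2 * k + 1) ^ n * k)
      ≤ 2 * n * (3 ^ n * (k:ℝ) ^ n) * k := by
        have e2 : ((2:ℝ) * k + 1) ^ n ≤ (3 * k) ^ n :=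
          pow_le_pow_left₀ (by positivity) (by linarith) n
        rw [mul_pow] at e2
        have : (0:ℝ) ≤ 2 * n := by positivity
        exact mul_le_mul_of_nonneg_right (mul_le_mul_of_nonneg_left e2 this)
          (le_of_lt hkR)
    _ = (2 * n * 3 ^ n) * (k:ℝ) ^ (n + 1) := by rw [pow_succ]; ring
    _ ≤ (2 * n * 3 ^ n) * (k:ℝ) ^ (3 * n) := by
        apply mul_le_mul_of_nonneg_left (pow_le_pow_right₀ hk1 (by omega)) (by positivity)
    _ ≤ D * (k:ℝ) ^ (3 * n) := by
        apply mul_le_mul_of_nonneg_right _ (by positivity)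
        simp [hD]
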